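/- arXiv:2311.16355 — 2 statements merged into one kernel-verified Lean document; each statement's English description precedes it below -/
import Mathlib

section
/- In a topos satisfying the Nullstellensatz (every object is either initial or has a global element), if an object X has exactly two complemented subobjects (namely 0 and X itself, i.e., X is connected), then the unique map X → 1 is an epimorphism. -/
open CategoryTheory CategoryTheory.Limits

universe v u

variable (C : Type u) [Category.{v} C]

section Preamble

variable [HasFiniteLimits C] [HasFiniteColimits C] [HasImages C] [InitialMonoClass C]

instance monoFromTerminal {X : C} (a : ⊤_ C ⟶ X) : Mono a :=
  ⟨fun g h _ => terminal.hom_ext g h⟩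

/-- NS: every object is either initial or admits a global element. -/
def SatisfiesNS : Prop := ∀ X : C, Nonempty (IsInitial X) ∨ Nonempty (⊤_ C ⟶ X)

/-- A subobject is complemented if it has a complement in the subobject lattice. -/
def IsComplementedSub {X : C} (A : Subobject X) : Prop :=
  ∃ B : Subobject X, A ⊓ B = ⊥ ∧ A ⊔ B = ⊤

/-- An object is connected if it has exactly two complemented subobjects: ⊥ and ⊤, distinct. -/
def IsConnectedObj (X : C) : Prop :=
  (⊥ : Subobject X) ≠ ⊤ ∧ ∀ A : Subobject X, IsComplementedSub C A → A = ⊥ ∨ A = ⊤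

/-- The object 2 = 1 + 1. -/
noncomputable def decTwo : C := (⊤_ C) ⨿ (⊤_ C)

/-- An object is decidable if its diagonal is a complemented subobject. -/
def IsDecidableObj (Y : C) : Prop := IsComplementedSub C (Subobject.mk (diag Y))

/-- The fiber of `f` over a global element `b`, as an object. -/
noncomputable def fib {X Y : C} (f : X ⟶ Y) (b : ⊤_ C ⟶ Y) : C := pullback f b

/-- The fiber of `f` over a global element `b`, as a subobject of the domain. -/
noncomputable def fibSub {X Y : C} (f : X ⟶ Y) (b : ⊤_ C ⟶ Y) : Subobject X :=
  (Subobject.pullback f).obj (Subobject.mk b)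

end Preamble

variable [HasFiniteLimits C] [HasFiniteColimits C] [HasImages C] [InitialMonoClass C]

theorem stmt0 (hNS : SatisfiesNS C) (X : C) (hX : IsConnectedObj C X) :
    Epi (terminal.from X) := by
  rcases hNS X with ⟨⟨hI⟩⟩ | ⟨⟨a⟩⟩
  · exfalso
    apply hX.1
    rw [Subobject.bot_eq_initial_to]
    have : IsIso (initial.to X) :=
      ⟨hI.to _, initial.hom_ext _ _, hI.hom_ext _ _⟩
    exact Subobject.mk_eq_top_of_isIso _
  · exact ⟨fun g h w => by
      have := a ≫= w
      simpa [← Category.assoc, terminal.hom_ext (a ≫ terminal.from X) (𝟙 _)] using this⟩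
end

section
/- In a topos satisfying NS, two global elements of any object are either equal or disjoint: for any b₁, b₂ : 1 → B, either b₁ = b₂ or the pullback (intersection) of the subobjects determined by b₁ and b₂ is initial. -/
open CategoryTheory CategoryTheory.Limits

universe v u

variable (C : Type u) [Category.{v} C]

variable [HasFiniteLimits C] [HasFiniteColimits C] [HasImages C] [InitialMonoClass C]

lemma auxEqBot {X : C} (A : Subobject X) (h : IsInitial (A : C)) : A = ⊥ :=
  le_antisymm (Subobject.le_of_comm (h.to _) (h.hom_ext _ _)) bot_le

theorem stmt7 (hNS : SatisfiesNS C) (B : C) (b₁ b₂ : ⊤_ C ⟶ B) :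
    b₁ = b₂ ∨ Subobject.mk b₁ ⊓ Subobject.mk b₂ = ⊥ := by
  rcases hNS (pullback b₁ b₂) with ⟨⟨hQ⟩⟩ | ht
  · right
    haveI : Mono (pullback.fst b₁ b₂ ≫ b₁) := mono_comp _ _
    have hmkbot : Subobject.mk (pullback.fst b₁ b₂ ≫ b₁) = ⊥ :=
      auxEqBot C _ (hQ.ofIso (Subobject.underlyingIso _).symm)
    have hle : Subobject.mk b₁ ⊓ Subobject.mk b₂ ≤ Subobject.mk (pullback.fst b₁ b₂ ≫ b₁) := by
      set S := Subobject.mk b₁ ⊓ Subobject.mk b₂ with hS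
      have h1 : terminal.from (S : C) ≫ b₁ = S.arrow := by
        have := Subobject.ofLEMk_comp (inf_le_left : S ≤ Subobject.mk b₁)
        rwa [show Subobject.ofLEMk S b₁ inf_le_left = terminal.from _ from
          terminal.hom_ext _ _] at this
      have h2 : terminal.from (S : C) ≫ b₂ = S.arrow := by
        have := Subobject.ofLEMk_comp (inf_le_right : S ≤ Subobject.mk b₂)
        rwa [show Subobject.ofLEMk S b₂ inf_le_right = terminal.from _ from
          terminal.hom_ext _ _] at this
      refine Subobject.le_mk_of_comm
        (pullback.lift (terminal.from _) (terminal.from _) (h1.trans h2.symm)) ?_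
      rw [← Category.assoc, pullback.lift_fst, h1]
    rw [hmkbot] at hle
    exact le_bot_iff.mp hle
  · left
    obtain ⟨t⟩ := ht
    have h1 : t ≫ pullback.fst b₁ b₂ = 𝟙 _ := terminal.hom_ext _ _
    have h2 : t ≫ pullback.snd b₁ b₂ = 𝟙 _ := terminal.hom_ext _ _
    calc b₁ = (t ≫ pullback.fst b₁ b₂) ≫ b₁ := by rw [h1, Category.id_comp]
      _ = (t ≫ pullback.snd b₁ b₂) ≫ b₂ := by
          rw [Category.assoc, Category.assoc, pullback.condition]
      _ = b₂ := by rw [h2, Category.id_comp]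
end
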